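/- Unbiasedness of SURE via Stein's lemma: for each i, E[f(X_{i1}, X_{i2}, θ_{i1}; t)] = 0, where f(x1, x2, μ; t) = A(x1,x2) − σ1^2 B(x1,x2) − C(x1,x2)^2 − (x1 − μ) C(x1,x2), with C(x1,x2) = Σ_j (t_{j1} − x1) p(x1,x2; t_{j1}, t_{j2}) / (ρ + Σ_j p(x1,x2; t_{j1}, t_{j2})), A(x1,x2) = Σ_j (t_{j1} − x1)^2 p(x1,x2; t_{j1}, t_{j2}) / (ρ + Σ_j p), and B(x1,x2) = Σ_j p / (ρ + Σ_j p). -/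

import Mathlib

open MeasureTheory Real Filter

/-- Standard normal density. -/
noncomputable def gphi (x : ℝ) : ℝ := (Real.sqrt (2 * Real.pi))⁻¹ * Real.exp (-x ^ 2 / 2)

/-- Joint density of two independent normals with means `(t1, t2)` and
standard deviations `(σ1, σ2)`. -/
noncomputable def pdens (σ1 σ2 t1 t2 x1 x2 : ℝ) : ℝ :=
  gphi ((x1 - t1) / σ1) * gphi ((x2 - t2) / σ2) / (σ1 * σ2)

/-- `A(x1,x2)`: regularized posterior second moment. -/
noncomputable def termA (n : ℕ) (σ1 σ2 ρ : ℝ) (t : Fin n → Fin 2 → ℝ) (x1 x2 : ℝ) : ℝ :=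
  (∑ j : Fin n, (t j 0 - x1) ^ 2 * pdens σ1 σ2 (t j 0) (t j 1) x1 x2) /
  (ρ + ∑ j : Fin n, pdens σ1 σ2 (t j 0) (t j 1) x1 x2)

/-- `B(x1,x2)`: regularized mass ratio. -/
noncomputable def termB (n : ℕ) (σ1 σ2 ρ : ℝ) (t : Fin n → Fin 2 → ℝ) (x1 x2 : ℝ) : ℝ :=
  (∑ j : Fin n, pdens σ1 σ2 (t j 0) (t j 1) x1 x2) /
  (ρ + ∑ j : Fin n, pdens σ1 σ2 (t j 0) (t j 1) x1 x2)

/-- `C(x1,x2)`: regularized posterior first moment. -/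
noncomputable def termC (n : ℕ) (σ1 σ2 ρ : ℝ) (t : Fin n → Fin 2 → ℝ) (x1 x2 : ℝ) : ℝ :=
  (∑ j : Fin n, (t j 0 - x1) * pdens σ1 σ2 (t j 0) (t j 1) x1 x2) /
  (ρ + ∑ j : Fin n, pdens σ1 σ2 (t j 0) (t j 1) x1 x2)

lemma gphi_pos (x : ℝ) : 0 < gphi x := by unfold gphi; positivity
lemma gphi_le_one (x : ℝ) : gphi x ≤ 1 := by
  unfold gphi
  have h1 : (1:ℝ) ≤ Real.sqrt (2 * Real.pi) := by
    rw [show (1:ℝ) = Real.sqrt 1 by simp]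
    exact Real.sqrt_le_sqrt (by nlinarith [Real.pi_gt_three])
  have h2 : Real.exp (-x ^ 2 / 2) ≤ 1 := by
    rw [Real.exp_le_one_iff]; nlinarith [sq_nonneg x]
  calc (Real.sqrt (2 * Real.pi))⁻¹ * Real.exp (-x ^ 2 / 2) ≤ 1 * 1 := by
        apply mul_le_mul _ h2 (le_of_lt (Real.exp_pos _)) zero_le_one
        exact inv_le_one_of_one_le₀ h1
    _ = 1 := by ring
lemma gphi_le_exp (x : ℝ) : gphi x ≤ Real.exp (-x ^ 2 / 2) := by
  unfold gphi
  have h1 : (1:ℝ) ≤ Real.sqrt (2 * Real.pi) := by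
    rw [show (1:ℝ) = Real.sqrt 1 by simp]
    exact Real.sqrt_le_sqrt (by nlinarith [Real.pi_gt_three])
  nlinarith [Real.exp_pos (-x ^ 2 / 2), inv_le_one_of_one_le₀ h1,
    inv_pos.mpr (lt_of_lt_of_le one_pos h1)]
lemma abs_mul_exp_neg_sq_half (x : ℝ) : |x| * Real.exp (-x ^ 2 / 2) ≤ 1 := by
  have h := Real.add_one_le_exp (x ^ 2 / 2)
  have h3 : |x| ≤ Real.exp (x ^ 2 / 2) := le_trans (by nlinarith [abs_nonneg x, sq_abs x]) h
  calc |x| * Real.exp (-x ^ 2 / 2) ≤ Real.exp (x ^ 2 / 2) * Real.exp (-x ^ 2 / 2) :=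
        mul_le_mul_of_nonneg_right h3 (le_of_lt (Real.exp_pos _))
    _ = 1 := by rw [← Real.exp_add]; ring_nf; exact Real.exp_zero
lemma abs_mul_gphi_le (x : ℝ) : |x| * gphi x ≤ 1 := by
  have := abs_mul_exp_neg_sq_half x
  have h2 := gphi_le_exp x
  nlinarith [abs_nonneg x, gphi_pos x, Real.exp_pos (-x^2/2)]
lemma sq_mul_exp_neg_sq_half (x : ℝ) : x ^ 2 * Real.exp (-x ^ 2 / 2) ≤ 2 := by
  have h := Real.add_one_le_exp (x ^ 2 / 2)
  have h3 : x ^ 2 / 2 ≤ Real.exp (x ^ 2 / 2) := by nlinarith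
  calc x ^ 2 * Real.exp (-x ^ 2 / 2) ≤ 2 * Real.exp (x ^ 2 / 2) * Real.exp (-x ^ 2 / 2) := by
        nlinarith [Real.exp_pos (-x^2/2)]
    _ = 2 := by rw [mul_assoc, ← Real.exp_add]; ring_nf; simp
lemma sq_mul_gphi_le (x : ℝ) : x ^ 2 * gphi x ≤ 2 := by
  have := sq_mul_exp_neg_sq_half x
  have h2 := gphi_le_exp x
  nlinarith [sq_nonneg x, gphi_pos x, Real.exp_pos (-x^2/2)]
lemma abs_mul_exp_neg_sq_quarter (x : ℝ) : |x| * Real.exp (-x ^ 2 / 4) ≤ 2 := by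
  have h := Real.add_one_le_exp (x ^ 2 / 4)
  have h3 : |x| ≤ 2 * Real.exp (x ^ 2 / 4) := by nlinarith [abs_nonneg x, sq_abs x]
  calc |x| * Real.exp (-x ^ 2 / 4) ≤ 2 * Real.exp (x ^ 2 / 4) * Real.exp (-x ^ 2 / 4) :=
        mul_le_mul_of_nonneg_right h3 (le_of_lt (Real.exp_pos _))
    _ = 2 := by rw [mul_assoc, ← Real.exp_add]; ring_nf; simp
lemma gphi_hasDerivAt (x : ℝ) : HasDerivAt gphi (-x * gphi x) x := by
  unfold gphi
  have h1 : HasDerivAt (fun y : ℝ => -y ^ 2 / 2) (-x) x := by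
    have := ((hasDerivAt_pow 2 x).neg).div_const 2
    simpa using this.congr_deriv (by ring)
  exact ((h1.exp).const_mul (Real.sqrt (2 * Real.pi))⁻¹).congr_deriv (by ring)
lemma gphi_comp_hasDerivAt (σ c x : ℝ) (hσ : σ ≠ 0) :
    HasDerivAt (fun y : ℝ => gphi ((y - c) / σ)) (-((x - c) / σ ^ 2) * gphi ((x - c) / σ)) x := by
  have h1 : HasDerivAt (fun y : ℝ => (y - c) / σ) (1 / σ) x := by
    simpa using ((hasDerivAt_id x).sub_const c).div_const σ
  refine ((gphi_hasDerivAt ((x - c) / σ)).comp x h1).congr_deriv ?_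
  generalize gphi ((x - c) / σ) = G
  rw [sq]; field_simp
lemma gphi_tendsto_atTop (σ c : ℝ) (hσ : 0 < σ) :
    Tendsto (fun y : ℝ => gphi ((y - c) / σ)) atTop (nhds 0) := by
  have h1 : Tendsto (fun y : ℝ => -((y - c) / σ) ^ 2 / 2) atTop atBot := by
    apply Tendsto.atBot_div_const (by norm_num)
    apply tendsto_neg_atTop_atBot.comp
    have habs : Tendsto (fun y : ℝ => |(y - c) / σ|) atTop atTop := by
      apply tendsto_abs_atTop_atTop.comp
      exact ((tendsto_atTop_add_const_right _ (-c) tendsto_id).atTop_div_const hσ).congr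
        (by intro y; simp [sub_eq_add_neg])
    exact ((tendsto_pow_atTop (n := 2) (by norm_num)).comp habs).congr fun y => by simp [sq_abs]
  have := (Real.tendsto_exp_atBot).comp h1
  unfold gphi
  simpa using this.const_mul (Real.sqrt (2 * Real.pi))⁻¹
lemma gphi_tendsto_atBot (σ c : ℝ) (hσ : 0 < σ) :
    Tendsto (fun y : ℝ => gphi ((y - c) / σ)) atBot (nhds 0) := by
  have h1 : Tendsto (fun y : ℝ => -((y - c) / σ) ^ 2 / 2) atBot atBot := by
    apply Tendsto.atBot_div_const (by norm_num)
    apply tendsto_neg_atTop_atBot.comp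
    have habs : Tendsto (fun y : ℝ => |(y - c) / σ|) atBot atTop := by
      apply tendsto_abs_atBot_atTop.comp
      exact ((tendsto_atBot_add_const_right _ (-c) tendsto_id).atBot_div_const hσ).congr
        (by intro y; simp [sub_eq_add_neg])
    exact ((tendsto_pow_atTop (n := 2) (by norm_num)).comp habs).congr fun y => by simp [sq_abs]
  have := (Real.tendsto_exp_atBot).comp h1
  unfold gphi
  simpa using this.const_mul (Real.sqrt (2 * Real.pi))⁻¹

/-- Domination of linear-times-gaussian by a wider gaussian. -/
lemma domin (σ K1 K2 μ : ℝ) (hσ : 0 < σ) (hK1 : 0 ≤ K1) (hK2 : 0 ≤ K2) (y : ℝ) :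
    (K1 + K2 * |y - μ|) * (gphi ((y - μ) / σ) / σ) ≤
      ((K1 + 2 * K2 * σ) / σ) * Real.exp (-((4 * σ ^ 2)⁻¹ * (y - μ) ^ 2)) := by
  set u := (y - μ) / σ with hu
  have huy : |y - μ| = σ * |u| := by
    rw [hu, abs_div, abs_of_pos hσ]; field_simp
  have hσ' : σ ≠ 0 := hσ.ne'
  have hsq : (4 * σ ^ 2)⁻¹ * (y - μ) ^ 2 = u ^ 2 / 4 := by
    rw [hu, div_pow]; field_simp
  rw [huy, hsq]
  have hE : Real.exp (-u ^ 2 / 2) = Real.exp (-(u ^ 2 / 4)) * Real.exp (-(u ^ 2 / 4)) := by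
    rw [← Real.exp_add]; ring_nf
  have h1 : gphi u ≤ Real.exp (-(u ^ 2 / 4)) * Real.exp (-(u ^ 2 / 4)) := by
    rw [← hE]; exact gphi_le_exp u
  have h2 : |u| * Real.exp (-(u ^ 2 / 4)) ≤ 2 := by
    have := abs_mul_exp_neg_sq_quarter u
    rw [show -u^2/4 = -(u^2/4) by ring] at this; exact this
  have h3 : Real.exp (-(u ^ 2 / 4)) ≤ 1 := by
    rw [Real.exp_le_one_iff]; nlinarith [sq_nonneg u]
  have hEpos : 0 < Real.exp (-(u ^ 2 / 4)) := Real.exp_pos _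
  rw [show (K1 + 2 * K2 * σ) / σ * Real.exp (-(u ^ 2 / 4))
      = (K1 + 2 * K2 * σ) * (Real.exp (-(u ^ 2 / 4)) / σ) by ring]
  rw [← mul_div_assoc, ← mul_div_assoc, div_le_div_iff_of_pos_right hσ]
  nlinarith [mul_le_mul_of_nonneg_right h1
      (add_nonneg hK1 (mul_nonneg (mul_nonneg hK2 hσ.le) (abs_nonneg u))),
    mul_le_mul_of_nonneg_left h2 (mul_nonneg (mul_nonneg hK2 hσ.le) hEpos.le),
    mul_le_mul_of_nonneg_left h3 (mul_nonneg hK1 hEpos.le), hEpos.le, gphi_pos u]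
lemma stein_abstract (σ1 ρ μ1 KN K1 K2 : ℝ) (hσ1 : 0 < σ1) (hρ : 0 < ρ)
    (S N M : ℝ → ℝ)
    (hS0 : ∀ y, 0 ≤ S y)
    (hS' : ∀ y, HasDerivAt S (N y / σ1 ^ 2) y)
    (hN' : ∀ y, HasDerivAt N (M y / σ1 ^ 2 - S y) y)
    (hMcont : Continuous M)
    (hNb : ∀ y, |N y| ≤ KN)
    (hK1 : 0 ≤ K1) (hK2 : 0 ≤ K2)
    (hEb : ∀ y, |M y / (ρ + S y) - σ1 ^ 2 * (S y / (ρ + S y)) - (N y / (ρ + S y)) ^ 2 -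
      (y - μ1) * (N y / (ρ + S y))| ≤ K1 + K2 * |y - μ1|) :
    ∫ y : ℝ, (M y / (ρ + S y) - σ1 ^ 2 * (S y / (ρ + S y)) - (N y / (ρ + S y)) ^ 2 -
      (y - μ1) * (N y / (ρ + S y))) * (gphi ((y - μ1) / σ1) / σ1) = 0 := by
  have hden : ∀ y, 0 < ρ + S y := fun y => add_pos_of_pos_of_nonneg hρ (hS0 y)
  set φ : ℝ → ℝ := fun y => gphi ((y - μ1) / σ1) / σ1 with hφdef
  set F1 : ℝ → ℝ := fun y => (M y / (ρ + S y) - σ1 ^ 2 * (S y / (ρ + S y)) -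
      (N y / (ρ + S y)) ^ 2 - (y - μ1) * (N y / (ρ + S y))) * φ y with hF1def
  set G : ℝ → ℝ := fun y => σ1 ^ 2 * (N y / (ρ + S y) * φ y) with hGdef
  have hφpos : ∀ y, 0 < φ y := fun y => div_pos (gphi_pos _) hσ1
  -- derivative of φ
  have hφ' : ∀ y, HasDerivAt φ (-((y - μ1) / σ1 ^ 2) * φ y) y := by
    intro y
    refine ((gphi_comp_hasDerivAt σ1 μ1 y hσ1.ne').div_const σ1).congr_deriv ?_
    simp only [hφdef]; rw [mul_div_assoc]
  -- derivative of G is F1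
  have hG' : ∀ y, HasDerivAt G (F1 y) y := by
    intro y
    have hC : HasDerivAt (fun z => N z / (ρ + S z))
        (((M y / σ1 ^ 2 - S y) * (ρ + S y) - N y * (N y / σ1 ^ 2)) / (ρ + S y) ^ 2) y :=
      (hN' y).div ((hS' y).const_add ρ) (hden y).ne'
    refine ((hC.mul (hφ' y)).const_mul (σ1 ^ 2)).congr_deriv ?_
    have h1 : ρ + S y ≠ 0 := (hden y).ne'
    have h2 : σ1 ≠ 0 := hσ1.ne'
    simp only [hF1def]
    field_simp
    ring
  -- continuity
  have hScont : Continuous S :=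
    continuous_iff_continuousAt.mpr fun y => (hS' y).differentiableAt.continuousAt
  have hNcont : Continuous N :=
    continuous_iff_continuousAt.mpr fun y => (hN' y).differentiableAt.continuousAt
  have hgphicont : Continuous gphi := by
    unfold gphi; fun_prop
  have hφcont : Continuous φ := by
    simp only [hφdef]
    exact (hgphicont.comp (by fun_prop)).div_const σ1
  have hdencont : Continuous fun y => ρ + S y := continuous_const.add hScont
  have hdenne : ∀ y, ρ + S y ≠ 0 := fun y => (hden y).ne'
  have hF1cont : Continuous F1 := by
    simp only [hF1def]
    exact ((((hMcont.div hdencont hdenne).sub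
      (continuous_const.mul (hScont.div hdencont hdenne))).sub
      ((hNcont.div hdencont hdenne).pow 2)).sub
      (((continuous_id.sub continuous_const)).mul (hNcont.div hdencont hdenne))).mul hφcont
  -- dominating function
  have hb : (0:ℝ) < (4 * σ1 ^ 2)⁻¹ := by positivity
  have hgint : Integrable (fun y : ℝ =>
      ((K1 + 2 * K2 * σ1) / σ1) * Real.exp (-((4 * σ1 ^ 2)⁻¹ * (y - μ1) ^ 2))) := by
    have h0 : Integrable (fun y : ℝ => Real.exp (-(4 * σ1 ^ 2)⁻¹ * y ^ 2)) :=
      integrable_exp_neg_mul_sq hb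
    have h1 := h0.comp_sub_right μ1
    have h2 := h1.const_mul ((K1 + 2 * K2 * σ1) / σ1)
    refine h2.congr (ae_of_all _ fun y => ?_)
    simp only [neg_mul]
  -- pointwise bound
  have hbound : ∀ y, ‖F1 y‖ ≤
      ((K1 + 2 * K2 * σ1) / σ1) * Real.exp (-((4 * σ1 ^ 2)⁻¹ * (y - μ1) ^ 2)) := by
    intro y
    have h1 : ‖F1 y‖ ≤ (K1 + K2 * |y - μ1|) * φ y := by
      simp only [hF1def, norm_mul, Real.norm_eq_abs, abs_of_pos (hφpos y)]
      exact mul_le_mul_of_nonneg_right (hEb y) (hφpos y).le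
    exact h1.trans (domin σ1 K1 K2 μ1 hσ1 hK1 hK2 y)
  have hF1int : Integrable F1 :=
    Integrable.mono' hgint hF1cont.aestronglyMeasurable (ae_of_all _ hbound)
  -- bound on C = N/(ρ+S)
  have hKN : 0 ≤ KN := le_trans (abs_nonneg _) (hNb 0)
  have hCb : ∀ y, |N y / (ρ + S y)| ≤ KN / ρ := by
    intro y
    rw [abs_div, abs_of_pos (hden y), div_le_div_iff₀ (hden y) hρ]
    nlinarith [hNb y, abs_nonneg (N y), hS0 y]
  -- tendsto of G at ±∞
  have hGnorm : ∀ y, ‖G y‖ ≤ σ1 ^ 2 * (KN / ρ) * (gphi ((y - μ1) / σ1) / σ1) := by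
    intro y
    simp only [hGdef, norm_mul, Real.norm_eq_abs, abs_mul]
    rw [abs_of_pos (hφpos y), abs_of_nonneg (sq_nonneg σ1)]
    rw [mul_assoc]
    apply mul_le_mul_of_nonneg_left _ (sq_nonneg σ1)
    exact mul_le_mul_of_nonneg_right (hCb y) (hφpos y).le
  have hGtop : Tendsto G atTop (nhds 0) := by
    apply squeeze_zero_norm hGnorm
    have := ((gphi_tendsto_atTop σ1 μ1 hσ1).div_const σ1).const_mul (σ1 ^ 2 * (KN / ρ))
    simpa using this
  have hGbot : Tendsto G atBot (nhds 0) := by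
    apply squeeze_zero_norm hGnorm
    have := ((gphi_tendsto_atBot σ1 μ1 hσ1).div_const σ1).const_mul (σ1 ^ 2 * (KN / ρ))
    simpa using this
  -- improper FTC on both halves
  have h1 : ∫ y in Set.Ioi (0:ℝ), F1 y = 0 - G 0 :=
    integral_Ioi_of_hasDerivAt_of_tendsto' (fun y _ => hG' y) hF1int.integrableOn hGtop
  have h2 : ∫ y in Set.Iic (0:ℝ), F1 y = G 0 - 0 :=
    integral_Iic_of_hasDerivAt_of_tendsto' (fun y _ => hG' y) hF1int.integrableOn hGbot
  have h3 : (∫ y in Set.Iic (0:ℝ), F1 y) + ∫ y in Set.Ioi (0:ℝ), F1 y = ∫ y, F1 y := by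
    rw [← Set.compl_Iic]
    exact integral_add_compl measurableSet_Iic hF1int
  show ∫ y, F1 y = 0
  rw [← h3, h1, h2]
  ring
lemma pdens_pos (σ1 σ2 t1 t2 x1 x2 : ℝ) (hσ1 : 0 < σ1) (hσ2 : 0 < σ2) :
    0 < pdens σ1 σ2 t1 t2 x1 x2 := by
  unfold pdens
  have := gphi_pos ((x1 - t1) / σ1); have := gphi_pos ((x2 - t2) / σ2)
  positivity
lemma pdens_hasDerivAt (σ1 σ2 a b x2 : ℝ) (hσ1 : σ1 ≠ 0) (y : ℝ) :
    HasDerivAt (fun z => pdens σ1 σ2 a b z x2)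
      ((a - y) / σ1 ^ 2 * pdens σ1 σ2 a b y x2) y := by
  have h := (gphi_comp_hasDerivAt σ1 a y hσ1).mul_const
    (gphi ((x2 - b) / σ2) / (σ1 * σ2))
  have heq : (fun z => pdens σ1 σ2 a b z x2) =
      fun z => gphi ((z - a) / σ1) * (gphi ((x2 - b) / σ2) / (σ1 * σ2)) := by
    funext z; unfold pdens; ring
  rw [heq]
  refine h.congr_deriv ?_
  unfold pdens; ring
lemma abs_term_pdens_le (σ1 σ2 a b x2 y : ℝ) (hσ1 : 0 < σ1) (hσ2 : 0 < σ2) :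
    |(a - y) * pdens σ1 σ2 a b y x2| ≤ 1 / σ2 := by
  have hp := pdens_pos σ1 σ2 a b y x2 hσ1 hσ2
  rw [abs_mul, abs_of_pos hp]
  have hu : |a - y| = σ1 * |(y - a) / σ1| := by
    rw [abs_div, abs_of_pos hσ1, abs_sub_comm]; field_simp
  rw [hu]
  unfold pdens
  have h1 := abs_mul_gphi_le ((y - a) / σ1)
  have h2 := gphi_le_one ((x2 - b) / σ2)
  have hg1 := gphi_pos ((y - a) / σ1)
  have hg2 := gphi_pos ((x2 - b) / σ2)
  have key : σ1 * |(y - a) / σ1| * (gphi ((y - a) / σ1) * gphi ((x2 - b) / σ2) / (σ1 * σ2))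
      = (|(y - a) / σ1| * gphi ((y - a) / σ1)) * gphi ((x2 - b) / σ2) / σ2 := by
    field_simp
  rw [key]
  rw [div_le_div_iff₀ (by positivity) hσ2]
  nlinarith [abs_nonneg ((y - a) / σ1), mul_le_mul h1 h2 hg2.le zero_le_one]
lemma sq_term_pdens_le (σ1 σ2 a b x2 y : ℝ) (hσ1 : 0 < σ1) (hσ2 : 0 < σ2) :
    (a - y) ^ 2 * pdens σ1 σ2 a b y x2 ≤ 2 * σ1 / σ2 := by
  have hu : (a - y) ^ 2 = σ1 ^ 2 * ((y - a) / σ1) ^ 2 := by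
    field_simp; ring
  rw [hu]
  unfold pdens
  have h1 := sq_mul_gphi_le ((y - a) / σ1)
  have h2 := gphi_le_one ((x2 - b) / σ2)
  have hg1 := gphi_pos ((y - a) / σ1)
  have hg2 := gphi_pos ((x2 - b) / σ2)
  have key : σ1 ^ 2 * ((y - a) / σ1) ^ 2 *
        (gphi ((y - a) / σ1) * gphi ((x2 - b) / σ2) / (σ1 * σ2))
      = (((y - a) / σ1) ^ 2 * gphi ((y - a) / σ1)) * gphi ((x2 - b) / σ2) * σ1 / σ2 := by
    field_simp
  rw [key]
  rw [div_le_div_iff₀ (by positivity) hσ2]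
  nlinarith [mul_le_mul h1 h2 hg2.le (by norm_num : (0:ℝ) ≤ 2), mul_pos hσ1 hσ2,
    mul_nonneg (mul_nonneg (sq_nonneg ((y - a) / σ1)) hg1.le) hg2.le]
section bounds
variable (n : ℕ) (σ1 σ2 ρ : ℝ) (t : Fin n → Fin 2 → ℝ) (y x2 : ℝ)
variable (hσ1 : 0 < σ1) (hσ2 : 0 < σ2) (hρ : 0 < ρ)
include hσ1 hσ2
lemma Ssum_nonneg : 0 ≤ ∑ j : Fin n, pdens σ1 σ2 (t j 0) (t j 1) y x2 :=
  Finset.sum_nonneg fun j _ => (pdens_pos _ _ _ _ _ _ hσ1 hσ2).le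
include hρ in
lemma den_pos : 0 < ρ + ∑ j : Fin n, pdens σ1 σ2 (t j 0) (t j 1) y x2 :=
  add_pos_of_pos_of_nonneg hρ (Ssum_nonneg n σ1 σ2 t y x2 hσ1 hσ2)
lemma Nsum_abs_le :
    |∑ j : Fin n, (t j 0 - y) * pdens σ1 σ2 (t j 0) (t j 1) y x2| ≤ n / σ2 := by
  calc |∑ j : Fin n, (t j 0 - y) * pdens σ1 σ2 (t j 0) (t j 1) y x2|
      ≤ ∑ j : Fin n, |(t j 0 - y) * pdens σ1 σ2 (t j 0) (t j 1) y x2| :=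
        Finset.abs_sum_le_sum_abs _ _
    _ ≤ ∑ _j : Fin n, 1 / σ2 :=
        Finset.sum_le_sum fun j _ => abs_term_pdens_le σ1 σ2 _ _ _ _ hσ1 hσ2
    _ = n / σ2 := by
        rw [Finset.sum_const, Finset.card_univ, Fintype.card_fin, nsmul_eq_mul, mul_one_div]
lemma Msum_le :
    ∑ j : Fin n, (t j 0 - y) ^ 2 * pdens σ1 σ2 (t j 0) (t j 1) y x2 ≤ n * (2 * σ1 / σ2) := by
  calc ∑ j : Fin n, (t j 0 - y) ^ 2 * pdens σ1 σ2 (t j 0) (t j 1) y x2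
      ≤ ∑ _j : Fin n, 2 * σ1 / σ2 :=
        Finset.sum_le_sum fun j _ => sq_term_pdens_le σ1 σ2 _ _ _ _ hσ1 hσ2
    _ = n * (2 * σ1 / σ2) := by
        rw [Finset.sum_const, Finset.card_univ, Fintype.card_fin, nsmul_eq_mul]
include hρ in
lemma termC_abs_le : |termC n σ1 σ2 ρ t y x2| ≤ n / (σ2 * ρ) := by
  have hden := den_pos n σ1 σ2 ρ t y x2 hσ1 hσ2 hρ
  have hN := Nsum_abs_le n σ1 σ2 t y x2 hσ1 hσ2
  have hS := Ssum_nonneg n σ1 σ2 t y x2 hσ1 hσ2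
  unfold termC
  rw [abs_div, abs_of_pos hden, div_le_div_iff₀ hden (by positivity)]
  have hkey : (n:ℝ) / σ2 * (σ2 * ρ) = n * ρ := by field_simp
  nlinarith [mul_le_mul_of_nonneg_right hN (by positivity : (0:ℝ) ≤ σ2 * ρ),
    mul_nonneg (Nat.cast_nonneg (α := ℝ) n) hS]
include hρ in
lemma termA_abs_le : |termA n σ1 σ2 ρ t y x2| ≤ 2 * n * σ1 / (σ2 * ρ) := by
  have hden := den_pos n σ1 σ2 ρ t y x2 hσ1 hσ2 hρ
  have hM := Msum_le n σ1 σ2 t y x2 hσ1 hσ2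
  have hM0 : 0 ≤ ∑ j : Fin n, (t j 0 - y) ^ 2 * pdens σ1 σ2 (t j 0) (t j 1) y x2 :=
    Finset.sum_nonneg fun j _ =>
      mul_nonneg (sq_nonneg _) (pdens_pos _ _ _ _ _ _ hσ1 hσ2).le
  have hS := Ssum_nonneg n σ1 σ2 t y x2 hσ1 hσ2
  unfold termA
  rw [abs_div, abs_of_pos hden, abs_of_nonneg hM0, div_le_div_iff₀ hden (by positivity)]
  have hkey : n * (2 * σ1 / σ2) * (σ2 * ρ) = 2 * n * σ1 * ρ := by field_simp
  nlinarith [mul_le_mul_of_nonneg_right hM (by positivity : (0:ℝ) ≤ σ2 * ρ),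
    mul_nonneg (by positivity : (0:ℝ) ≤ 2 * (n:ℝ) * σ1) hS]
include hρ in
lemma termB_abs_le : |termB n σ1 σ2 ρ t y x2| ≤ 1 := by
  have hden := den_pos n σ1 σ2 ρ t y x2 hσ1 hσ2 hρ
  have hS := Ssum_nonneg n σ1 σ2 t y x2 hσ1 hσ2
  unfold termB
  rw [abs_div, abs_of_pos hden, abs_of_nonneg hS, div_le_one hden]
  linarith
include hρ in
lemma Ebound (μ1 : ℝ) :
    |termA n σ1 σ2 ρ t y x2 - σ1 ^ 2 * termB n σ1 σ2 ρ t y x2 -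
      (termC n σ1 σ2 ρ t y x2) ^ 2 - (y - μ1) * termC n σ1 σ2 ρ t y x2| ≤
    (2 * n * σ1 / (σ2 * ρ) + σ1 ^ 2 + (n / (σ2 * ρ)) ^ 2) + (n / (σ2 * ρ)) * |y - μ1| := by
  have hA := termA_abs_le n σ1 σ2 ρ t y x2 hσ1 hσ2 hρ
  have hB := termB_abs_le n σ1 σ2 ρ t y x2 hσ1 hσ2 hρ
  have hC := termC_abs_le n σ1 σ2 ρ t y x2 hσ1 hσ2 hρ
  set A := termA n σ1 σ2 ρ t y x2
  set B := termB n σ1 σ2 ρ t y x2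
  set C := termC n σ1 σ2 ρ t y x2
  have hC2 : C ^ 2 ≤ (n / (σ2 * ρ)) ^ 2 := by
    rw [← sq_abs C]; exact pow_le_pow_left₀ (abs_nonneg _) hC 2
  have hyC : |(y - μ1) * C| ≤ |y - μ1| * (n / (σ2 * ρ)) := by
    rw [abs_mul]; exact mul_le_mul_of_nonneg_left hC (abs_nonneg _)
  rw [abs_le]
  constructor
  · nlinarith [neg_abs_le A, le_abs_self A, neg_abs_le B, le_abs_self B,
      neg_abs_le ((y - μ1) * C), le_abs_self ((y - μ1) * C), sq_nonneg C,
      sq_nonneg σ1, abs_nonneg (y - μ1)]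
  · nlinarith [neg_abs_le A, le_abs_self A, neg_abs_le B, le_abs_self B,
      neg_abs_le ((y - μ1) * C), le_abs_self ((y - μ1) * C), sq_nonneg C,
      sq_nonneg σ1, abs_nonneg (y - μ1)]
end bounds
lemma pdens_cont (σ1 σ2 a b x2 : ℝ) : Continuous fun y => pdens σ1 σ2 a b y x2 := by
  unfold pdens
  have hg : Continuous gphi := by unfold gphi; fun_prop
  exact ((hg.comp (by fun_prop)).mul continuous_const).div_const _
lemma inner_zero (n : ℕ) (σ1 σ2 ρ μ1 : ℝ) (hσ1 : 0 < σ1) (hσ2 : 0 < σ2) (hρ : 0 < ρ)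
    (t : Fin n → Fin 2 → ℝ) (x2 : ℝ) :
    ∫ y : ℝ, (termA n σ1 σ2 ρ t y x2 - σ1 ^ 2 * termB n σ1 σ2 ρ t y x2 -
      (termC n σ1 σ2 ρ t y x2) ^ 2 - (y - μ1) * termC n σ1 σ2 ρ t y x2) *
      (gphi ((y - μ1) / σ1) / σ1) = 0 := by
  have hS' : ∀ y, HasDerivAt (fun z => ∑ j : Fin n, pdens σ1 σ2 (t j 0) (t j 1) z x2)
      ((∑ j : Fin n, (t j 0 - y) * pdens σ1 σ2 (t j 0) (t j 1) y x2) / σ1 ^ 2) y := by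
    intro y
    have h := HasDerivAt.fun_sum (fun j (_ : j ∈ Finset.univ) =>
      pdens_hasDerivAt σ1 σ2 (t j 0) (t j 1) x2 hσ1.ne' y)
    refine h.congr_deriv ?_
    rw [Finset.sum_div]
    exact Finset.sum_congr rfl fun j _ => by ring
  have hN' : ∀ y, HasDerivAt
      (fun z => ∑ j : Fin n, (t j 0 - z) * pdens σ1 σ2 (t j 0) (t j 1) z x2)
      ((∑ j : Fin n, (t j 0 - y) ^ 2 * pdens σ1 σ2 (t j 0) (t j 1) y x2) / σ1 ^ 2
        - ∑ j : Fin n, pdens σ1 σ2 (t j 0) (t j 1) y x2) y := by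
    intro y
    have h := HasDerivAt.fun_sum (fun j (_ : j ∈ Finset.univ) =>
      (((hasDerivAt_const y (t j 0)).sub (hasDerivAt_id y)).mul
        (pdens_hasDerivAt σ1 σ2 (t j 0) (t j 1) x2 hσ1.ne' y)))
    refine h.congr_deriv ?_
    rw [Finset.sum_div, ← Finset.sum_sub_distrib]
    exact Finset.sum_congr rfl fun j _ => by simp only [Pi.sub_apply, id_eq]; ring
  have hMcont : Continuous
      fun z => ∑ j : Fin n, (t j 0 - z) ^ 2 * pdens σ1 σ2 (t j 0) (t j 1) z x2 :=
    continuous_finset_sum _ fun j _ =>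
      (((continuous_const.sub continuous_id).pow 2).mul (pdens_cont σ1 σ2 _ _ x2))
  exact stein_abstract σ1 ρ μ1 ((n : ℝ) / σ2)
    (2 * n * σ1 / (σ2 * ρ) + σ1 ^ 2 + ((n : ℝ) / (σ2 * ρ)) ^ 2) ((n : ℝ) / (σ2 * ρ)) hσ1 hρ
    _ _ _
    (fun y => Ssum_nonneg n σ1 σ2 t y x2 hσ1 hσ2)
    hS' hN' hMcont
    (fun y => Nsum_abs_le n σ1 σ2 t y x2 hσ1 hσ2)
    (by positivity) (by positivity)
    (fun y => Ebound n σ1 σ2 ρ t y x2 hσ1 hσ2 hρ μ1)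
lemma gphi_div_le (σ μ z : ℝ) (hσ : 0 < σ) :
    gphi ((z - μ) / σ) / σ ≤ (1 / σ) * Real.exp (-((4 * σ ^ 2)⁻¹ * (z - μ) ^ 2)) := by
  have h1 := gphi_le_exp ((z - μ) / σ)
  have h2 : Real.exp (-((z - μ) / σ) ^ 2 / 2) ≤ Real.exp (-((4 * σ ^ 2)⁻¹ * (z - μ) ^ 2)) := by
    apply Real.exp_le_exp.mpr
    rw [div_pow]
    have h3 : (4 * σ ^ 2)⁻¹ * (z - μ) ^ 2 ≤ (z - μ) ^ 2 / σ ^ 2 / 2 := by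
      rw [div_div, show (4 * σ ^ 2)⁻¹ * (z - μ) ^ 2 = (z - μ) ^ 2 / (4 * σ ^ 2) by ring,
        div_le_div_iff₀ (by positivity) (by positivity)]
      nlinarith [sq_nonneg (z - μ), sq_nonneg σ]
    linarith
  calc gphi ((z - μ) / σ) / σ ≤ Real.exp (-((4 * σ ^ 2)⁻¹ * (z - μ) ^ 2)) / σ :=
        (div_le_div_iff_of_pos_right hσ).mpr (h1.trans h2)
    _ = (1 / σ) * Real.exp (-((4 * σ ^ 2)⁻¹ * (z - μ) ^ 2)) := by ring
lemma pdens_cont2 (σ1 σ2 a b : ℝ) : Continuous fun x : ℝ × ℝ => pdens σ1 σ2 a b x.1 x.2 := by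
  unfold pdens
  have hg : Continuous gphi := by unfold gphi; fun_prop
  exact ((hg.comp ((continuous_fst.sub continuous_const).div_const σ1)).mul
    (hg.comp ((continuous_snd.sub continuous_const).div_const σ2))).div_const _

/-- Unbiasedness of SURE via Stein's lemma: for `(X_{i1}, X_{i2})` independent normals
with means `(μ1, μ2)` and variances `(σ1², σ2²)`,
`E[A − σ1² B − C² − (X_{i1} − μ1) C] = 0`. -/
theorem stmt6 (n : ℕ) (σ1 σ2 ρ μ1 μ2 : ℝ) (hσ1 : 0 < σ1) (hσ2 : 0 < σ2) (hρ : 0 < ρ)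
    (t : Fin n → Fin 2 → ℝ) :
    ∫ x : ℝ × ℝ,
      (termA n σ1 σ2 ρ t x.1 x.2 - σ1 ^ 2 * termB n σ1 σ2 ρ t x.1 x.2 -
        (termC n σ1 σ2 ρ t x.1 x.2) ^ 2 - (x.1 - μ1) * termC n σ1 σ2 ρ t x.1 x.2) *
        pdens σ1 σ2 μ1 μ2 x.1 x.2 = 0 := by
  set K1 : ℝ := 2 * n * σ1 / (σ2 * ρ) + σ1 ^ 2 + ((n : ℝ) / (σ2 * ρ)) ^ 2 with hK1def
  set K2 : ℝ := (n : ℝ) / (σ2 * ρ) with hK2def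
  have hK1 : 0 ≤ K1 := by rw [hK1def]; positivity
  have hK2 : 0 ≤ K2 := by rw [hK2def]; positivity
  -- continuity of the integrand
  have hg : Continuous gphi := by unfold gphi; fun_prop
  have hdenpos : ∀ x : ℝ × ℝ, 0 < ρ + ∑ j : Fin n, pdens σ1 σ2 (t j 0) (t j 1) x.1 x.2 :=
    fun x => den_pos n σ1 σ2 ρ t x.1 x.2 hσ1 hσ2 hρ
  have hdenne : ∀ x : ℝ × ℝ, ρ + ∑ j : Fin n, pdens σ1 σ2 (t j 0) (t j 1) x.1 x.2 ≠ 0 :=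
    fun x => (hdenpos x).ne'
  have hdencont : Continuous fun x : ℝ × ℝ =>
      ρ + ∑ j : Fin n, pdens σ1 σ2 (t j 0) (t j 1) x.1 x.2 :=
    continuous_const.add (continuous_finset_sum _ fun j _ => pdens_cont2 σ1 σ2 _ _)
  have hAcont : Continuous fun x : ℝ × ℝ => termA n σ1 σ2 ρ t x.1 x.2 := by
    unfold termA
    exact (continuous_finset_sum _ fun j _ =>
      (((continuous_const.sub continuous_fst).pow 2).mul (pdens_cont2 σ1 σ2 _ _))).div
      hdencont hdenne
  have hBcont : Continuous fun x : ℝ × ℝ => termB n σ1 σ2 ρ t x.1 x.2 := by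
    unfold termB
    exact (continuous_finset_sum _ fun j _ => pdens_cont2 σ1 σ2 _ _).div hdencont hdenne
  have hCcont : Continuous fun x : ℝ × ℝ => termC n σ1 σ2 ρ t x.1 x.2 := by
    unfold termC
    exact (continuous_finset_sum _ fun j _ =>
      ((continuous_const.sub continuous_fst).mul (pdens_cont2 σ1 σ2 _ _))).div
      hdencont hdenne
  have hFcont : Continuous fun x : ℝ × ℝ =>
      (termA n σ1 σ2 ρ t x.1 x.2 - σ1 ^ 2 * termB n σ1 σ2 ρ t x.1 x.2 -
        (termC n σ1 σ2 ρ t x.1 x.2) ^ 2 - (x.1 - μ1) * termC n σ1 σ2 ρ t x.1 x.2) *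
        pdens σ1 σ2 μ1 μ2 x.1 x.2 :=
    (((hAcont.sub (continuous_const.mul hBcont)).sub (hCcont.pow 2)).sub
      (((continuous_fst.sub continuous_const)).mul hCcont)).mul (pdens_cont2 σ1 σ2 μ1 μ2)
  -- dominating function
  have hb1 : (0:ℝ) < (4 * σ1 ^ 2)⁻¹ := by positivity
  have hb2 : (0:ℝ) < (4 * σ2 ^ 2)⁻¹ := by positivity
  have hD1int : Integrable (fun y : ℝ =>
      ((K1 + 2 * K2 * σ1) / σ1) * Real.exp (-((4 * σ1 ^ 2)⁻¹ * (y - μ1) ^ 2))) := by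
    have h0 : Integrable (fun y : ℝ => Real.exp (-(4 * σ1 ^ 2)⁻¹ * y ^ 2)) :=
      integrable_exp_neg_mul_sq hb1
    have h2 := (h0.comp_sub_right μ1).const_mul ((K1 + 2 * K2 * σ1) / σ1)
    refine h2.congr (ae_of_all _ fun y => ?_)
    simp only [neg_mul]
  have hD2int : Integrable (fun z : ℝ =>
      (1 / σ2) * Real.exp (-((4 * σ2 ^ 2)⁻¹ * (z - μ2) ^ 2))) := by
    have h0 : Integrable (fun z : ℝ => Real.exp (-(4 * σ2 ^ 2)⁻¹ * z ^ 2)) :=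
      integrable_exp_neg_mul_sq hb2
    have h2 := (h0.comp_sub_right μ2).const_mul (1 / σ2)
    refine h2.congr (ae_of_all _ fun z => ?_)
    simp only [neg_mul]
  have hbound : ∀ x : ℝ × ℝ,
      ‖(termA n σ1 σ2 ρ t x.1 x.2 - σ1 ^ 2 * termB n σ1 σ2 ρ t x.1 x.2 -
        (termC n σ1 σ2 ρ t x.1 x.2) ^ 2 - (x.1 - μ1) * termC n σ1 σ2 ρ t x.1 x.2) *
        pdens σ1 σ2 μ1 μ2 x.1 x.2‖ ≤
      (((K1 + 2 * K2 * σ1) / σ1) * Real.exp (-((4 * σ1 ^ 2)⁻¹ * (x.1 - μ1) ^ 2))) *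
        ((1 / σ2) * Real.exp (-((4 * σ2 ^ 2)⁻¹ * (x.2 - μ2) ^ 2))) := by
    intro x
    have hpd := pdens_pos σ1 σ2 μ1 μ2 x.1 x.2 hσ1 hσ2
    have hφ1 : (0:ℝ) < gphi ((x.1 - μ1) / σ1) / σ1 := div_pos (gphi_pos _) hσ1
    have hφ2 : (0:ℝ) < gphi ((x.2 - μ2) / σ2) / σ2 := div_pos (gphi_pos _) hσ2
    have hsplit : pdens σ1 σ2 μ1 μ2 x.1 x.2 =
        (gphi ((x.1 - μ1) / σ1) / σ1) * (gphi ((x.2 - μ2) / σ2) / σ2) := by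
      unfold pdens; ring
    have hE := Ebound n σ1 σ2 ρ t x.1 x.2 hσ1 hσ2 hρ μ1
    have hD1nn : (0:ℝ) ≤ ((K1 + 2 * K2 * σ1) / σ1) *
        Real.exp (-((4 * σ1 ^ 2)⁻¹ * (x.1 - μ1) ^ 2)) := by positivity
    calc ‖(termA n σ1 σ2 ρ t x.1 x.2 - σ1 ^ 2 * termB n σ1 σ2 ρ t x.1 x.2 -
        (termC n σ1 σ2 ρ t x.1 x.2) ^ 2 - (x.1 - μ1) * termC n σ1 σ2 ρ t x.1 x.2) *
        pdens σ1 σ2 μ1 μ2 x.1 x.2‖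
        = |termA n σ1 σ2 ρ t x.1 x.2 - σ1 ^ 2 * termB n σ1 σ2 ρ t x.1 x.2 -
        (termC n σ1 σ2 ρ t x.1 x.2) ^ 2 - (x.1 - μ1) * termC n σ1 σ2 ρ t x.1 x.2| *
        ((gphi ((x.1 - μ1) / σ1) / σ1) * (gphi ((x.2 - μ2) / σ2) / σ2)) := by
          rw [norm_mul, Real.norm_eq_abs, Real.norm_eq_abs, abs_of_pos hpd, hsplit]
      _ ≤ (K1 + K2 * |x.1 - μ1|) *
          ((gphi ((x.1 - μ1) / σ1) / σ1) * (gphi ((x.2 - μ2) / σ2) / σ2)) :=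
          mul_le_mul_of_nonneg_right hE (by positivity)
      _ = ((K1 + K2 * |x.1 - μ1|) * (gphi ((x.1 - μ1) / σ1) / σ1)) *
          (gphi ((x.2 - μ2) / σ2) / σ2) := by ring
      _ ≤ (((K1 + 2 * K2 * σ1) / σ1) * Real.exp (-((4 * σ1 ^ 2)⁻¹ * (x.1 - μ1) ^ 2))) *
          (gphi ((x.2 - μ2) / σ2) / σ2) :=
          mul_le_mul_of_nonneg_right (domin σ1 K1 K2 μ1 hσ1 hK1 hK2 x.1) hφ2.le
      _ ≤ (((K1 + 2 * K2 * σ1) / σ1) * Real.exp (-((4 * σ1 ^ 2)⁻¹ * (x.1 - μ1) ^ 2))) *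
          ((1 / σ2) * Real.exp (-((4 * σ2 ^ 2)⁻¹ * (x.2 - μ2) ^ 2))) :=
          mul_le_mul_of_nonneg_left (gphi_div_le σ2 μ2 x.2 hσ2) hD1nn
  have hFint : Integrable (fun x : ℝ × ℝ =>
      (termA n σ1 σ2 ρ t x.1 x.2 - σ1 ^ 2 * termB n σ1 σ2 ρ t x.1 x.2 -
        (termC n σ1 σ2 ρ t x.1 x.2) ^ 2 - (x.1 - μ1) * termC n σ1 σ2 ρ t x.1 x.2) *
        pdens σ1 σ2 μ1 μ2 x.1 x.2) ((volume : Measure ℝ).prod (volume : Measure ℝ)) := by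
    refine Integrable.mono' (hD1int.mul_prod hD2int) hFcont.aestronglyMeasurable
      (ae_of_all _ hbound)
  have key : ∀ x2 : ℝ, (∫ x1 : ℝ,
      (termA n σ1 σ2 ρ t x1 x2 - σ1 ^ 2 * termB n σ1 σ2 ρ t x1 x2 -
        (termC n σ1 σ2 ρ t x1 x2) ^ 2 - (x1 - μ1) * termC n σ1 σ2 ρ t x1 x2) *
        pdens σ1 σ2 μ1 μ2 x1 x2) = 0 := by
    intro x2
    have h1 : ∀ x1 : ℝ,
        (termA n σ1 σ2 ρ t x1 x2 - σ1 ^ 2 * termB n σ1 σ2 ρ t x1 x2 -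
          (termC n σ1 σ2 ρ t x1 x2) ^ 2 - (x1 - μ1) * termC n σ1 σ2 ρ t x1 x2) *
          pdens σ1 σ2 μ1 μ2 x1 x2 =
        ((termA n σ1 σ2 ρ t x1 x2 - σ1 ^ 2 * termB n σ1 σ2 ρ t x1 x2 -
          (termC n σ1 σ2 ρ t x1 x2) ^ 2 - (x1 - μ1) * termC n σ1 σ2 ρ t x1 x2) *
          (gphi ((x1 - μ1) / σ1) / σ1)) * (gphi ((x2 - μ2) / σ2) / σ2) := by
      intro x1; unfold pdens; ring
    simp_rw [h1]
    rw [integral_mul_const, inner_zero n σ1 σ2 ρ μ1 hσ1 hσ2 hρ t x2, zero_mul]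
  rw [Measure.volume_eq_prod]
  rw [integral_prod_symm _ hFint]
  simp only [key]
  exact integral_zero _ _
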